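/- If P : 𝓐 → ℝ is a function on an algebra of sets 𝓐 over Ω satisfying P(Ω) = 1, P(E) ≥ 0 for all E ∈ 𝓐, and P(E₁ ∪ E₂) = P(E₁) + P(E₂) whenever E₁, E₂ ∈ 𝓐 are disjoint, then P is coherent: for every finite family E₁,...,Eₙ ∈ 𝓐 and reals c₁,...,cₙ, the supremum over ω ∈ Ω of Σᵢ cᵢ (P(Eᵢ) − 𝟙_{Eᵢ}(ω)) is nonnegative. -/
import Mathlib


/-- De Finetti's coherence: no finite combination of bets has uniformly negative gain,
i.e. the sup over ω of the gain is nonnegative. -/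
def Coherent {Ω : Type*} (𝓔 : Set (Set Ω)) (P : Set Ω → ℝ) : Prop :=
  ∀ (n : ℕ) (E : Fin n → Set Ω) (c : Fin n → ℝ),
    (∀ i, E i ∈ 𝓔) →
    ∀ ε > (0 : ℝ), ∃ ω : Ω,
      -ε ≤ ∑ i, c i * (P (E i) - Set.indicator (E i) (fun _ => (1 : ℝ)) ω)


theorem fa_prob_on_algebra_coherent {Ω : Type*} [Nonempty Ω]
    (𝓐 : Set (Set Ω)) (P : Set Ω → ℝ)
    (huniv : Set.univ ∈ 𝓐)
    (hcompl : ∀ A ∈ 𝓐, Aᶜ ∈ 𝓐)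
    (hunion : ∀ A ∈ 𝓐, ∀ B ∈ 𝓐, A ∪ B ∈ 𝓐)
    (hPuniv : P Set.univ = 1)
    (hPnonneg : ∀ A ∈ 𝓐, 0 ≤ P A)
    (hPadd : ∀ A ∈ 𝓐, ∀ B ∈ 𝓐, Disjoint A B → P (A ∪ B) = P A + P B) :
    Coherent 𝓐 P := by
  classical
  intro n E c hE ε hε
  have hempty : (∅ : Set Ω) ∈ 𝓐 := by simpa using hcompl _ huniv
  have hP0 : P ∅ = 0 := by
    have h := hPadd ∅ hempty ∅ hempty (by simp)
    simp only [Set.union_empty] at h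
    linarith
  -- finite unions stay in 𝓐
  have hUnionFin : ∀ (s : Finset (Fin n → Bool)) (B : (Fin n → Bool) → Set Ω),
      (∀ i ∈ s, B i ∈ 𝓐) → (⋃ i ∈ s, B i) ∈ 𝓐 := by
    intro s B hB
    induction s using Finset.induction_on with
    | empty => simpa using hempty
    | @insert a s h ih =>
      rw [Finset.set_biUnion_insert]
      exact hunion _ (hB a (Finset.mem_insert_self a s))
        _ (ih fun i hi => hB i (Finset.mem_insert_of_mem hi))
  have hUnionFin' : ∀ (s : Finset (Fin n)) (B : Fin n → Set Ω),
      (∀ i ∈ s, B i ∈ 𝓐) → (⋃ i ∈ s, B i) ∈ 𝓐 := by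
    intro s B hB
    induction s using Finset.induction_on with
    | empty => simpa using hempty
    | @insert a s h ih =>
      rw [Finset.set_biUnion_insert]
      exact hunion _ (hB a (Finset.mem_insert_self a s))
        _ (ih fun i hi => hB i (Finset.mem_insert_of_mem hi))
  -- finite additivity
  have hAddFin : ∀ (s : Finset (Fin n → Bool)) (B : (Fin n → Bool) → Set Ω),
      (∀ i ∈ s, B i ∈ 𝓐) →
      (∀ i ∈ s, ∀ j ∈ s, i ≠ j → Disjoint (B i) (B j)) →
      P (⋃ i ∈ s, B i) = ∑ i ∈ s, P (B i) := by
    intro s B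
    induction s using Finset.induction_on with
    | empty => intro _ _; simpa using hP0
    | @insert a s ha ih =>
      intro hB hdisj
      rw [Finset.set_biUnion_insert, Finset.sum_insert ha]
      have hdBa : Disjoint (B a) (⋃ i ∈ s, B i) := by
        rw [Set.disjoint_iUnion_right]
        intro i
        rw [Set.disjoint_iUnion_right]
        intro hi
        exact hdisj a (Finset.mem_insert_self a s) i (Finset.mem_insert_of_mem hi)
          (fun h => ha (h ▸ hi))
      rw [hPadd _ (hB a (Finset.mem_insert_self a s))
          _ (hUnionFin s B fun i hi => hB i (Finset.mem_insert_of_mem hi)) hdBa,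
        ih (fun i hi => hB i (Finset.mem_insert_of_mem hi))
          (fun i hi j hj hij => hdisj i (Finset.mem_insert_of_mem hi)
            j (Finset.mem_insert_of_mem hj) hij)]
  -- atoms
  set A : (Fin n → Bool) → Set Ω := fun σ => ⋂ i, (if σ i then E i else (E i)ᶜ) with hA
  have hmemA : ∀ σ ω, ω ∈ A σ ↔ ∀ i, (σ i = true ↔ ω ∈ E i) := by
    intro σ ω
    simp only [hA, Set.mem_iInter]
    constructor
    · intro h i
      have := h i
      by_cases hσ : σ i = true
      · simp [hσ] at this; simp [hσ, this]
      · simp [hσ] at this ⊢; simpa using this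
    · intro h i
      by_cases hσ : σ i = true
      · simp [hσ, (h i).mp hσ]
      · have : ω ∉ E i := fun hw => hσ ((h i).mpr hw)
        simp [hσ, this]
  have hAmem : ∀ σ, A σ ∈ 𝓐 := by
    intro σ
    have : A σ = (⋃ i ∈ (Finset.univ : Finset (Fin n)), (if σ i then E i else (E i)ᶜ)ᶜ)ᶜ := by
      simp [hA, Set.compl_iUnion]
    rw [this]
    apply hcompl
    apply hUnionFin'
    intro i _
    by_cases hσ : σ i = true
    · simp only [hσ, if_true]; exact hcompl _ (hE i)
    · simp only [hσ, if_false]; simpa using hE i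
  have hdisjA : ∀ σ τ : Fin n → Bool, σ ≠ τ → Disjoint (A σ) (A τ) := by
    intro σ τ hne
    rw [Set.disjoint_left]
    intro ω hσ hτ
    apply hne
    funext i
    have h1 := (hmemA σ ω).mp hσ i
    have h2 := (hmemA τ ω).mp hτ i
    by_cases h : ω ∈ E i
    · rw [h1.mpr h, h2.mpr h]
    · cases hb : σ i with
      | false =>
        cases hb' : τ i with
        | false => rfl
        | true => exact absurd (h2.mp hb') h
      | true => exact absurd (h1.mp hb) h
  -- atoms cover univ
  have hcover : (⋃ σ ∈ (Finset.univ : Finset (Fin n → Bool)), A σ) = Set.univ := by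
    ext ω
    simp only [Set.mem_univ, iff_true, Set.mem_iUnion]
    refine ⟨fun i => decide (ω ∈ E i), Finset.mem_univ _, ?_⟩
    rw [hmemA]
    intro i
    simp
  -- atoms with σ i = true cover E i
  have hcoverE : ∀ i, (⋃ σ ∈ Finset.univ.filter (fun σ : Fin n → Bool => σ i = true), A σ)
      = E i := by
    intro i
    ext ω
    simp only [Set.mem_iUnion, Finset.mem_filter, Finset.mem_univ, true_and]
    constructor
    · rintro ⟨σ, hσi, hω⟩
      exact ((hmemA σ ω).mp hω i).mp hσi
    · intro hω
      refine ⟨fun j => decide (ω ∈ E j), by simp [hω], ?_⟩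
      rw [hmemA]; intro j; simp
  have hsum1 : ∑ σ : Fin n → Bool, P (A σ) = 1 := by
    rw [← hAddFin Finset.univ A (fun σ _ => hAmem σ)
      (fun σ _ τ _ h => hdisjA σ τ h), hcover, hPuniv]
  have hsumE : ∀ i, ∑ σ ∈ Finset.univ.filter (fun σ : Fin n → Bool => σ i = true), P (A σ)
      = P (E i) := by
    intro i
    rw [← hAddFin _ A (fun σ _ => hAmem σ) (fun σ _ τ _ h => hdisjA σ τ h), hcoverE]
  -- value of the gain on atom σ
  set g : (Fin n → Bool) → ℝ :=
    fun σ => ∑ i, c i * (P (E i) - (if σ i then (1:ℝ) else 0)) with hg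
  have hS : ∑ σ : Fin n → Bool, P (A σ) * g σ = 0 := by
    simp only [hg, Finset.mul_sum]
    rw [Finset.sum_comm]
    apply Finset.sum_eq_zero
    intro i _
    have h1 : ∑ σ : Fin n → Bool, P (A σ) * (c i * (P (E i) - (if σ i then (1:ℝ) else 0)))
        = c i * (P (E i) * (∑ σ : Fin n → Bool, P (A σ))
            - ∑ σ : Fin n → Bool, (if σ i then P (A σ) else 0)) := by
      simp only [mul_sub, Finset.mul_sum, ← Finset.sum_sub_distrib]
      apply Finset.sum_congr rfl
      intro σ _
      by_cases hσ : σ i = true <;> simp [hσ] <;> ring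
    rw [h1, hsum1]
    have h2 : ∑ σ : Fin n → Bool, (if σ i then P (A σ) else 0) = P (E i) := by
      rw [← hsumE i, Finset.sum_filter]
    rw [h2]
    ring
  -- find an atom with positive probability and nonnegative gain
  have hPA : ∀ σ, 0 ≤ P (A σ) := fun σ => hPnonneg _ (hAmem σ)
  have hex : ∃ σ, 0 < P (A σ) ∧ 0 ≤ g σ := by
    by_contra hcon
    push_neg at hcon
    have hexpos : ∃ σ, 0 < P (A σ) := by
      by_contra hc
      push_neg at hc
      have : ∑ σ : Fin n → Bool, P (A σ) = 0 :=
        Finset.sum_eq_zero fun σ _ => le_antisymm (hc σ) (hPA σ)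
      rw [hsum1] at this; linarith
    obtain ⟨σ₀, hσ₀⟩ := hexpos
    have hlt : ∑ σ : Fin n → Bool, P (A σ) * g σ < ∑ σ : Fin n → Bool, (0:ℝ) := by
      apply Finset.sum_lt_sum
      · intro σ _
        rcases lt_or_eq_of_le (hPA σ) with h | h
        · exact le_of_lt (mul_neg_of_pos_of_neg h (hcon σ h))
        · rw [← h]; simp
      · exact ⟨σ₀, Finset.mem_univ _, mul_neg_of_pos_of_neg hσ₀ (hcon σ₀ hσ₀)⟩
    simp only [Finset.sum_const_zero] at hlt
    linarith [hS]
  obtain ⟨σ, hPσ, hgσ⟩ := hex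
  have hne : (A σ).Nonempty := by
    rw [Set.nonempty_iff_ne_empty]
    intro h
    rw [h, hP0] at hPσ
    linarith
  obtain ⟨ω, hω⟩ := hne
  refine ⟨ω, ?_⟩
  have hind : ∀ i, Set.indicator (E i) (fun _ => (1:ℝ)) ω = if σ i then (1:ℝ) else 0 := by
    intro i
    have h := (hmemA σ ω).mp hω i
    by_cases hσ : σ i = true
    · simp [hσ, Set.indicator_of_mem (h.mp hσ)]
    · have : ω ∉ E i := fun hw => hσ (h.mpr hw)
      simp [hσ, Set.indicator_of_notMem this]
  have : ∑ i, c i * (P (E i) - Set.indicator (E i) (fun _ => (1 : ℝ)) ω) = g σ := by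
    apply Finset.sum_congr rfl
    intro i _
    rw [hind i]
  rw [this]
  linarith
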